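/- Let G be a group of order v and D₁, D₂, D₃ be (v,k,λ)-difference sets in G with n = k - λ dividing λ. If n divides the group ring product D₁D₂D₃ in ℤ[G] (all coefficients divisible by n), then there exists a (v,k,λ)-difference set D in G such that D₁D₂D₃ = (n + λG)·D in ℤ[G]. -/

import Mathlib

open Finset
open scoped Pointwise

/-- The formal sum `∑_{x ∈ s} x` of a finite subset of a group in the
integral group ring `ℤ[G]`. -/
noncomputable def fsum {G : Type*} [Group G] [DecidableEq G] (s : Finset G) :
    MonoidAlgebra ℤ G :=
  ∑ x ∈ s, MonoidAlgebra.single x 1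

/-- `D` is a `(v,k,λ)`-difference set in the finite group `G` (with `v = |G|`):
`|D| = k` and `D D^{(-1)} = (k-λ)·1 + λ·G` in `ℤ[G]`. -/
def IsDiffSet {G : Type*} [Group G] [Fintype G] [DecidableEq G]
    (D : Finset G) (k lam : ℕ) : Prop :=
  D.card = k ∧
    fsum D * fsum D⁻¹ = ((k : ℤ) - lam) • 1 + (lam : ℤ) • fsum (univ : Finset G)

namespace DSAux

set_option linter.unusedSectionVars false

variable {G : Type*} [Group G] [Fintype G] [DecidableEq G]

/-- The augmentation map `ℤ[G] → ℤ`. -/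
noncomputable def aug : MonoidAlgebra ℤ G →ₐ[ℤ] ℤ := MonoidAlgebra.lift ℤ ℤ G 1

@[simp] lemma aug_single (g : G) (c : ℤ) : aug (MonoidAlgebra.single g c) = c := by
  simp [aug, MonoidAlgebra.lift_single]

lemma eq_sum_single (x : MonoidAlgebra ℤ G) :
    x = ∑ g : G, MonoidAlgebra.single g (x.coeff g) := by
  ext h; rw [MonoidAlgebra.coeff_sum, Finset.sum_apply']; simp [Finsupp.single_apply]

lemma aug_apply (x : MonoidAlgebra ℤ G) : aug x = ∑ g, x.coeff g := by
  conv_lhs => rw [eq_sum_single x]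
  rw [map_sum]; simp

@[simp] lemma aug_fsum (s : Finset G) : aug (fsum s) = s.card := by
  simp [fsum, map_sum]

@[simp] lemma fsum_apply (s : Finset G) (g : G) :
    (fsum s).coeff g = if g ∈ s then 1 else 0 := by
  rw [fsum, MonoidAlgebra.coeff_sum, Finset.sum_apply']
  simp [Finsupp.single_apply, eq_comm]

lemma fsum_empty : fsum (∅ : Finset G) = 0 := by simp [fsum]

lemma one_apply' (g : G) : (1 : MonoidAlgebra ℤ G).coeff g = if g = 1 then 1 else 0 := by
  rw [MonoidAlgebra.one_def, MonoidAlgebra.coeff_single, Finsupp.single_apply]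
  simp [eq_comm]

lemma single_mul_G (g : G) (r : ℤ) :
    MonoidAlgebra.single g r * fsum univ = r • fsum univ := by
  rw [fsum, Finset.mul_sum, Finset.smul_sum]
  rw [← Equiv.sum_comp (Equiv.mulLeft g) (fun x => r • MonoidAlgebra.single x (1:ℤ))]
  apply Finset.sum_congr rfl
  intro x _
  rw [MonoidAlgebra.single_mul_single]
  simp [Finsupp.smul_single, Equiv.coe_mulLeft]

lemma G_mul_single (g : G) (r : ℤ) :
    fsum univ * MonoidAlgebra.single g r = r • fsum univ := by
  rw [fsum, Finset.sum_mul, Finset.smul_sum]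
  rw [← Equiv.sum_comp (Equiv.mulRight g) (fun x => r • MonoidAlgebra.single x (1:ℤ))]
  apply Finset.sum_congr rfl
  intro x _
  rw [MonoidAlgebra.single_mul_single]
  simp [Finsupp.smul_single, Equiv.coe_mulRight, mul_comm]

lemma mul_G (x : MonoidAlgebra ℤ G) : x * fsum univ = aug x • fsum univ := by
  conv_lhs => rw [eq_sum_single x]
  rw [Finset.sum_mul, aug_apply]
  simp only [single_mul_G]
  rw [Finset.sum_smul]

lemma G_mul (x : MonoidAlgebra ℤ G) : fsum univ * x = aug x • fsum univ := by
  conv_lhs => rw [eq_sum_single x]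
  rw [Finset.mul_sum, aug_apply]
  simp only [G_mul_single]
  rw [Finset.sum_smul]

/-- The antipode `g ↦ g⁻¹` on `ℤ[G]`, as an additive map. -/
noncomputable def ip : MonoidAlgebra ℤ G →+ MonoidAlgebra ℤ G :=
  { toFun := fun x => MonoidAlgebra.mapDomain (·⁻¹) x
    map_zero' := MonoidAlgebra.mapDomain_zero _
    map_add' := MonoidAlgebra.mapDomain_add _ }

@[simp] lemma ip_single (g : G) (c : ℤ) :
    ip (MonoidAlgebra.single g c) = MonoidAlgebra.single g⁻¹ c := by
  show MonoidAlgebra.mapDomain _ _ = _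
  rw [MonoidAlgebra.mapDomain_single]

lemma ip_apply (x : MonoidAlgebra ℤ G) (g : G) : (ip x).coeff g = x.coeff g⁻¹ := by
  show Finsupp.mapDomain _ x.coeff _ = _
  have := Finsupp.mapDomain_apply (f := (·⁻¹ : G → G)) (fun a b h => inv_injective h) x.coeff g⁻¹
  simpa using this

lemma ip_mul (a b : MonoidAlgebra ℤ G) : ip (a * b) = ip b * ip a := by
  induction a using MonoidAlgebra.induction_linear with
  | zero => simp
  | add f g hf hg => simp [add_mul, mul_add, hf, hg]
  | single g c =>
    induction b using MonoidAlgebra.induction_linear with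
    | zero => simp
    | add f g' hf hg => simp only [mul_add, add_mul, map_add, hf, hg]
    | single h d =>
      show ip (MonoidAlgebra.single g c * MonoidAlgebra.single h d) = _
      rw [MonoidAlgebra.single_mul_single, ip_single, ip_single, ip_single,
        MonoidAlgebra.single_mul_single, mul_inv_rev, mul_comm d c]

lemma ip_fsum (s : Finset G) : ip (fsum s) = fsum s⁻¹ := by
  rw [fsum, map_sum]
  simp only [ip_single]
  rw [show (s⁻¹ : Finset G) = s.image (·⁻¹) from (Finset.image_inv_eq_inv s).symm, fsum,
    Finset.sum_image (fun a _ b _ h => inv_injective h)]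

lemma ip_one : ip (1 : MonoidAlgebra ℤ G) = 1 := by
  rw [MonoidAlgebra.one_def, ip_single, inv_one, ← MonoidAlgebra.one_def]

lemma mul_apply_one' (x y : MonoidAlgebra ℤ G) : (x * y).coeff 1 = ∑ g, x.coeff g * y.coeff g⁻¹ := by
  rw [MonoidAlgebra.coeff_mul_apply_left, Finsupp.sum_fintype _ _ (by simp)]
  simp

lemma c_cancel (a b : ℤ) (ha : a ≠ 0) (hab : a + b * (Fintype.card G : ℤ) ≠ 0)
    (x : MonoidAlgebra ℤ G)
    (h : (a • (1 : MonoidAlgebra ℤ G) + b • fsum univ) * x = 0) : x = 0 := by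
  rw [add_mul, smul_mul_assoc, one_mul, smul_mul_assoc, G_mul] at h
  have h2 := congrArg aug h
  rw [map_add, map_zsmul, map_zsmul, map_zsmul, aug_fsum, card_univ, map_zero] at h2
  have haug : aug x = 0 := by
    have : (a + b * (Fintype.card G : ℤ)) * aug x = 0 := by
      rw [add_mul]
      simpa [smul_eq_mul, mul_comm, mul_left_comm, mul_assoc] using h2
    exact (mul_eq_zero.mp this).resolve_left hab
  rw [haug, zero_smul, smul_zero, add_zero] at h
  ext g
  have hg := congrArg (fun z : MonoidAlgebra ℤ G => z.coeff g) h
  simp only [MonoidAlgebra.coeff_smul, MonoidAlgebra.coeff_zero, Finsupp.smul_apply, smul_eq_mul, Finsupp.coe_zero, Pi.zero_apply] at hg ⊢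
  exact (mul_eq_zero.mp hg).resolve_left ha

end DSAux

open DSAux in
theorem stmt11 {G : Type*} [Group G] [Fintype G] [DecidableEq G]
    (D₁ D₂ D₃ : Finset G) (k lam : ℕ) (hlk : lam ≤ k)
    (h1 : IsDiffSet D₁ k lam) (h2 : IsDiffSet D₂ k lam) (h3 : IsDiffSet D₃ k lam)
    (hdvd : (k - lam) ∣ lam)
    (hdiv : ∃ E : MonoidAlgebra ℤ G,
      fsum D₁ * fsum D₂ * fsum D₃ = ((k : ℤ) - lam) • E) :
    ∃ D : Finset G, IsDiffSet D k lam ∧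
      fsum D₁ * fsum D₂ * fsum D₃ =
        (((k : ℤ) - lam) • 1 + (lam : ℤ) • fsum (univ : Finset G)) * fsum D := by
  classical
  obtain ⟨E, hE⟩ := hdiv
  set n : ℤ := (k : ℤ) - lam with hn
  set A : MonoidAlgebra ℤ G := fsum D₁ * fsum D₂ * fsum D₃ with hA
  have haugA : aug A = (k:ℤ) * k * k := by
    rw [hA, map_mul, map_mul, aug_fsum, aug_fsum, aug_fsum, h1.1, h2.1, h3.1]
  by_cases hn0 : n = 0
  · -- degenerate case
    have hA0 : A = 0 := by rw [hE, hn0, zero_smul]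
    have hk3 : (k:ℤ) * k * k = 0 := by rw [← haugA, hA0, map_zero]
    have hk : k = 0 := by
      have : (k:ℤ) = 0 := by nlinarith [sq_nonneg ((k:ℤ))]
      exact_mod_cast this
    have hlam : lam = 0 := Nat.le_zero.mp (hk ▸ hlk)
    subst hk; subst hlam
    refine ⟨∅, ⟨rfl, ?_⟩, ?_⟩
    · simp [fsum_empty]
    · rw [hA0]
      simp [fsum_empty]
  · -- main case
    have hlamnn : (0:ℤ) ≤ lam := Int.natCast_nonneg lam
    have hnpos : 0 < n := lt_of_le_of_ne (by rw [hn]; simp; exact_mod_cast hlk) (Ne.symm hn0)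
    have hkpos : (0:ℤ) < k := by rw [hn] at hnpos; linarith
    set v : ℤ := (Fintype.card G : ℤ) with hv
    -- k² = n + λ v
    have hk2 : (k:ℤ) * k = n + (lam:ℤ) * v := by
      have h := congrArg aug h1.2
      rw [map_mul, aug_fsum, aug_fsum, Finset.card_inv, h1.1, map_add, map_zsmul, map_zsmul,
        map_one, aug_fsum, card_univ] at h
      simpa [smul_eq_mul] using h
    set c : MonoidAlgebra ℤ G := n • 1 + (lam:ℤ) • fsum univ with hc
    have hGG : (fsum univ : MonoidAlgebra ℤ G) * fsum univ = v • fsum univ := by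
      rw [G_mul, aug_fsum, card_univ]
    have hmul : ∀ a b a' b' : ℤ,
        (a • (1 : MonoidAlgebra ℤ G) + b • fsum univ) * (a' • 1 + b' • fsum univ)
          = (a * a') • 1 + (a * b' + b * a' + b * b' * v) • fsum univ := by
      intro a b a' b'
      simp only [mul_add, add_mul, smul_mul_assoc, mul_smul_comm, one_mul, mul_one, hGG,
        smul_smul]
      module
    have hcomm : ∀ x : MonoidAlgebra ℤ G, c * x = x * c := by
      intro x
      rw [hc, add_mul, mul_add, smul_mul_assoc, one_mul, mul_smul_comm, mul_one,
        smul_mul_assoc, mul_smul_comm, G_mul, mul_G]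
    have hpull : ∀ x y : MonoidAlgebra ℤ G, x * (c * y) = c * (x * y) := by
      intro x y
      rw [← mul_assoc, ← hcomm x, mul_assoc]
    -- A · ip A = c³
    have hBA : fsum D₃⁻¹ * (fsum D₂⁻¹ * fsum D₁⁻¹) = ip A := by
      rw [hA, ip_mul, ip_mul, ip_fsum, ip_fsum, ip_fsum]
    have hAB : A * ip A = c * (c * c) := by
      rw [← hBA, hA]
      have step : fsum D₁ * fsum D₂ * fsum D₃ * (fsum D₃⁻¹ * (fsum D₂⁻¹ * fsum D₁⁻¹))
          = fsum D₁ * (fsum D₂ * (fsum D₃ * fsum D₃⁻¹ * (fsum D₂⁻¹ * fsum D₁⁻¹))) := by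
        simp only [mul_assoc]
      rw [step, h3.2, ← hc, hpull, ← mul_assoc (fsum D₂), h2.2, ← hc, hpull, hpull,
        h1.2, ← hc]
    -- explicit form of c³
    have hcc : c * c = (n*n) • (1 : MonoidAlgebra ℤ G)
        + (n*lam + lam*n + lam*lam*v) • fsum univ := by
      rw [hc]; exact hmul n lam n lam
    have hc3 : c * (c * c) = (n*(n*n)) • (1 : MonoidAlgebra ℤ G)
        + (n*(n*lam + lam*n + lam*lam*v) + lam*(n*n)
            + lam*(n*lam + lam*n + lam*lam*v)*v) • fsum univ := by
      rw [hcc, hc]; exact hmul n lam (n*n) (n*lam + lam*n + lam*lam*v)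
    -- the two coefficient sums
    have S1 : ∑ g, A.coeff g = (k:ℤ) * k * k := by rw [← aug_apply, haugA]
    have S2 : ∑ g, A.coeff g * A.coeff g = n*(n*n) + (n*(n*lam + lam*n + lam*lam*v) + lam*(n*n)
            + lam*(n*lam + lam*n + lam*lam*v)*v) := by
      have h1' := congrArg (fun z : MonoidAlgebra ℤ G => z.coeff 1) hAB
      rw [mul_apply_one', hc3] at h1'
      rw [MonoidAlgebra.coeff_add, Finsupp.add_apply, MonoidAlgebra.coeff_smul_apply,
        MonoidAlgebra.coeff_smul_apply, one_apply',
        fsum_apply] at h1'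
      simp only [ip_apply, inv_inv, mem_univ, if_true, if_pos, smul_eq_mul, mul_one] at h1'
      exact h1'
    -- n divides λ
    obtain ⟨l', hl'⟩ : n ∣ (lam:ℤ) := by
      have := Int.natCast_dvd_natCast.mpr hdvd
      rwa [Nat.cast_sub hlk, ← hn] at this
    -- coefficients of A take only the values λk, λk + n
    have hterm : ∀ g ∈ (univ : Finset G),
        0 ≤ (A.coeff g - lam*k) * (A.coeff g - lam*k - n) := by
      intro g _
      have hAg : A.coeff g = n * E.coeff g := by rw [hE, MonoidAlgebra.coeff_smul_apply, smul_eq_mul]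
      have e1 : A.coeff g - lam*k = n * (E.coeff g - l'*k) := by rw [hAg, hl']; ring
      have e2 : A.coeff g - lam*k - n = n * (E.coeff g - l'*k - 1) := by rw [hAg, hl']; ring
      rw [e2, e1]
      rcases le_or_gt (E.coeff g - l'*k) 0 with ht | ht
      · have h1t : n * (E.coeff g - l'*k) ≤ 0 := mul_nonpos_of_nonneg_of_nonpos hnpos.le ht
        have h2t : n * (E.coeff g - l'*k - 1) ≤ 0 :=
          mul_nonpos_of_nonneg_of_nonpos hnpos.le (by linarith)
        nlinarith [mul_nonneg (neg_nonneg.2 h1t) (neg_nonneg.2 h2t)]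
      · exact mul_nonneg (mul_nonneg hnpos.le (by linarith))
          (mul_nonneg hnpos.le (by linarith))
    have hzero : ∑ g, (A.coeff g - lam*k) * (A.coeff g - lam*k - n) = 0 := by
      have expand : ∀ g : G, (A.coeff g - lam*k) * (A.coeff g - lam*k - n)
          = A.coeff g * A.coeff g - (2*lam*k+n) * A.coeff g + lam*k*(lam*k+n) := fun g => by ring
      rw [Finset.sum_congr rfl (fun g _ => expand g), Finset.sum_add_distrib,
        Finset.sum_sub_distrib, ← Finset.mul_sum, Finset.sum_const, card_univ, S1, S2,
        nsmul_eq_mul, ← hv]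
      linear_combination (-(lam:ℤ)*lam*v - 2*lam*k*k - n*k - 2*n*lam) * hk2 + (n*n) * hn
    have key : ∀ g : G, A.coeff g = lam*k ∨ A.coeff g = lam*k + n := by
      intro g
      rcases mul_eq_zero.mp ((Finset.sum_eq_zero_iff_of_nonneg hterm).mp hzero g
        (mem_univ g)) with h | h
      · left; linarith
      · right; linarith
    set D : Finset G := univ.filter (fun g => A.coeff g = lam*k + n) with hD
    have hAD : A = n • fsum D + ((lam:ℤ)*k) • fsum univ := by
      ext g
      rw [MonoidAlgebra.coeff_add, Finsupp.add_apply, MonoidAlgebra.coeff_smul_apply,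
        MonoidAlgebra.coeff_smul_apply, fsum_apply, fsum_apply]
      simp only [mem_univ, if_true, hD, mem_filter, true_and, smul_eq_mul, mul_one]
      rcases key g with h | h
      · have hg : ¬ (A.coeff g = ↑lam * ↑k + n) := by rw [h]; intro hq; linarith
        rw [if_neg hg, h]; ring
      · rw [if_pos h, h]; ring
    have hcardD : D.card = k := by
      have h := congrArg aug hAD
      rw [haugA, map_add, map_zsmul, map_zsmul, aug_fsum, aug_fsum, card_univ, ← hv] at h
      have h' : n * (D.card : ℤ) = n * k := by
        simp only [smul_eq_mul] at h
        linear_combination (-1 : ℤ) * h + (k:ℤ) * hk2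
      exact_mod_cast mul_left_cancel₀ hn0 h'
    have hAcD : A = c * fsum D := by
      rw [hc, add_mul, smul_mul_assoc, one_mul, smul_mul_assoc, G_mul, aug_fsum, hcardD,
        smul_smul, hAD]
    -- D·D⁻¹ = c
    have hipc : ip c = c := by
      rw [hc, map_add, map_zsmul, map_zsmul, ip_one, ip_fsum, Finset.inv_univ]
    have hBD : ip A = fsum D⁻¹ * c := by
      rw [hAcD, ip_mul, hipc, ip_fsum]
    have hDDc : fsum D * fsum D⁻¹ = c := by
      have h7 : c * (c * (fsum D * fsum D⁻¹)) = c * (c * c) := by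
        rw [← hAB, hBD, hAcD, mul_assoc, ← mul_assoc (fsum D), ← hcomm]
      have hab : n + (lam:ℤ) * (Fintype.card G : ℤ) ≠ 0 := by
        rw [← hv, ← hk2]; positivity
      have h8 : c * (c * (fsum D * fsum D⁻¹ - c)) = 0 := by
        rw [mul_sub c, mul_sub c, h7, sub_self]
      have h9 : c * (fsum D * fsum D⁻¹ - c) = 0 := by
        apply c_cancel n lam hn0 hab
        rw [← hc]; exact h8
      have h10 : fsum D * fsum D⁻¹ - c = 0 := by
        apply c_cancel n lam hn0 hab
        rw [← hc]; exact h9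
      exact sub_eq_zero.mp h10
    exact ⟨D, ⟨hcardD, by rw [hDDc, hc, hn]⟩, hAcD⟩
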